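/- Let D be a k-linear triangulated category with a co-t-structure (D_{\ge 0}, D_{\le 0}) such that D is Karoubian (idempotent-complete) and for all X in D_{\ge 0} and Y in D_{\le 0} the vector space Hom(X, Y) is finite-dimensional over the field k. Then the coheart C = D_{\ge 0} \cap D_{\le 0} is a Krull--Schmidt category (every object decomposes as a finite direct sum of objects with local endomorphism rings). -/

import Mathlib

open CategoryTheory Limits Pretriangulated

namespace CoTAux

open Polynomial

theorem aeval_comm {k A : Type*} [Field k] [Ring A] [Algebra k A] (a : A) (r : k[X]) :
    a * Polynomial.aeval a r = Polynomial.aeval a r * a := by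
  calc a * aeval a r = aeval a (X * r) := by simp
    _ = aeval a (r * X) := by rw [mul_comm]
    _ = aeval a r * a := by simp

theorem aux_coeff_zero {k A : Type*} [Field k] [Ring A] [Nontrivial A] [Algebra k A]
    [FiniteDimensional k A] {a : A} (ha : ¬ IsUnit a) : (minpoly k a).coeff 0 = 0 := by
  by_contra hc
  apply ha
  have h0 : Polynomial.aeval a (minpoly k a) = 0 := minpoly.aeval k a
  set p := minpoly k a with hp
  have hdecomp : X * p.divX + C (p.coeff 0) = p := X_mul_divX_add p
  have habc : a * aeval a p.divX + algebraMap k A (p.coeff 0) = 0 := by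
    have h2 := congrArg (aeval a) hdecomp
    rw [map_add, map_mul, aeval_X, aeval_C, h0] at h2
    exact h2
  set b := aeval a p.divX with hb
  have hab' : a * b = - algebraMap k A (p.coeff 0) := eq_neg_of_add_eq_zero_left habc
  have hab : a * ((-(p.coeff 0)⁻¹) • b) = 1 := by
    rw [mul_smul_comm, hab', smul_neg, Algebra.smul_def, ← map_mul]
    simp [hc]
  have hba : ((-(p.coeff 0)⁻¹) • b) * a = 1 := by
    rw [smul_mul_assoc, ← aeval_comm, ← mul_smul_comm, hab]
  exact ⟨⟨a, _, hab, hba⟩, rfl⟩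

theorem exists_nontrivial_idem {k A : Type*} [Field k] [Ring A] [Nontrivial A] [Algebra k A]
    [FiniteDimensional k A] (h : ¬ IsLocalRing A) :
    ∃ e : A, e * e = e ∧ e ≠ 0 ∧ e ≠ 1 := by
  have hex : ¬ ∀ a : A, IsUnit a ∨ IsUnit (1 - a) := by
    intro hh
    exact h ⟨fun {x y} hxy => by
      rcases hh x with hx | hx
      · exact Or.inl hx
      · right; rwa [show y = 1 - x by rw [← hxy, add_sub_cancel_left]]⟩
  push_neg at hex
  obtain ⟨a, ha, ha'⟩ := hex
  set p := minpoly k a with hp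
  have hpne : p ≠ 0 := minpoly.ne_zero (Algebra.IsIntegral.isIntegral a)
  have hc0 : p.coeff 0 = 0 := aux_coeff_zero ha
  set m := p.rootMultiplicity 0 with hm
  obtain ⟨q, hq, hXq⟩ := p.exists_eq_pow_rootMultiplicity_mul_and_not_dvd hpne 0
  rw [map_zero, sub_zero] at hq hXq
  rw [← hm] at hq
  have hm1 : 1 ≤ m := by
    have hXp : X ∣ p := X_dvd_iff.mpr hc0
    by_contra hm0
    push_neg at hm0
    rw [Nat.lt_one_iff.mp hm0, pow_zero, one_mul] at hq
    exact hXq (hq ▸ hXp)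
  have h0 : (aeval a) p = 0 := minpoly.aeval k a
  have hqu : ¬ IsUnit q := by
    intro hqu
    apply ha'
    rw [hq, map_mul, map_pow, aeval_X] at h0
    obtain ⟨u, hu⟩ := hqu
    have hnil : a ^ m = 0 := by
      have hq0 : aeval a q * aeval a (↑u⁻¹ : k[X]) = 1 := by
        rw [← map_mul, ← hu]
        simp
      calc a ^ m = a ^ m * (aeval a q * aeval a (↑u⁻¹ : k[X])) := by rw [hq0, mul_one]
        _ = (a ^ m * aeval a q) * aeval a (↑u⁻¹ : k[X]) := by rw [mul_assoc]
        _ = 0 := by rw [h0, zero_mul]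
    exact IsNilpotent.isUnit_one_sub ⟨m, hnil⟩
  have hcop : IsCoprime (X ^ m : k[X]) q :=
    ((Polynomial.irreducible_X.coprime_iff_not_dvd).mpr hXq).pow_left
  obtain ⟨u, v, huv⟩ := hcop
  have h1 : aeval a (u * X ^ m) + aeval a (v * q) = 1 := by
    rw [← map_add, huv, map_one]
  refine ⟨aeval a (v * q), ?_, ?_, ?_⟩
  · have key : aeval a (v * q) * aeval a (u * X ^ m) = 0 := by
      rw [← map_mul]
      have hcalc : v * q * (u * X ^ m) = (v * u) * p := by rw [hq]; ring
      rw [hcalc, map_mul, h0, mul_zero]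
    have h2 : aeval a (v * q) * (aeval a (u * X ^ m) + aeval a (v * q)) = aeval a (v * q) := by
      rw [h1, mul_one]
    rwa [mul_add, key, zero_add] at h2
  · intro he
    have hdvd : p ∣ v * q := minpoly.dvd k a he
    have hXp : X ∣ p := X_dvd_iff.mpr hc0
    have hX1 : (X : k[X]) ∣ 1 := by
      rw [← huv]
      exact dvd_add (Dvd.dvd.mul_left (dvd_pow_self X (Nat.one_le_iff_ne_zero.mp hm1)) u)
        (hXp.trans hdvd)
    exact Polynomial.not_isUnit_X (isUnit_of_dvd_one hX1)
  · intro he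
    have hf0 : aeval a (u * X ^ m) = 0 := by
      rw [he] at h1
      have := add_right_cancel (b := (1 : A)) (by rw [h1, zero_add] : aeval a (u * X^m) + 1 = 0 + 1)
      exact this
    have hdvd : p ∣ u * X ^ m := minpoly.dvd k a hf0
    rw [hq] at hdvd
    have hq_dvd_u : q ∣ u := by
      have h3 : X ^ m * q ∣ X ^ m * u := by rwa [mul_comm u (X^m)] at hdvd
      exact (mul_dvd_mul_iff_left (pow_ne_zero m Polynomial.X_ne_zero)).mp h3
    have hq1 : q ∣ 1 := by
      rw [← huv]
      exact dvd_add (hq_dvd_u.mul_right _) (dvd_mul_left q v)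
    exact hqu (isUnit_of_dvd_one hq1)

section Split
variable {C : Type*} [Category C] [Preadditive C] [HasBinaryBiproducts C]

/-- Splittings of complementary idempotents assemble into a biproduct decomposition. -/
noncomputable def splitIso {X Y Z : C} (i : Y ⟶ X) (r : X ⟶ Y) (j : Z ⟶ X) (s : X ⟶ Z)
    (hir : i ≫ r = 𝟙 Y) (hjs : j ≫ s = 𝟙 Z) (hsum : r ≫ i + s ≫ j = 𝟙 X) :
    X ≅ Y ⊞ Z := by
  have hmj : IsSplitMono j := IsSplitMono.mk' ⟨s, hjs⟩
  have hmi : IsSplitMono i := IsSplitMono.mk' ⟨r, hir⟩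
  have his : i ≫ s = 0 := by
    have h1 : (i ≫ s) ≫ j = 0 := by
      have : i ≫ (r ≫ i + s ≫ j) = i := by rw [hsum, Category.comp_id]
      rw [Preadditive.comp_add, ← Category.assoc, ← Category.assoc, hir, Category.id_comp] at this
      have h2 := congrArg (fun w => w - i) this
      simpa using h2
    rw [← cancel_mono j, Category.assoc] at *
    simpa using h1
  have hjr : j ≫ r = 0 := by
    have h1 : (j ≫ r) ≫ i = 0 := by
      have : j ≫ (r ≫ i + s ≫ j) = j := by rw [hsum, Category.comp_id]
      rw [Preadditive.comp_add, ← Category.assoc, ← Category.assoc, hjs, Category.id_comp] at this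
      have h2 := congrArg (fun w => w - j) this
      simpa using h2
    rw [← cancel_mono i, Category.assoc]
    simpa using h1
  exact
  { hom := biprod.lift r s
    inv := biprod.desc i j
    hom_inv_id := by rw [biprod.lift_desc, hsum]
    inv_hom_id := by
      ext
      · simp [hir]
      · simp [his]
      · simp [hjr]
      · simp [hjs] }

end Split

section SumBiprod
variable {C : Type*} [Category C] [Preadditive C] [HasFiniteBiproducts C] [HasBinaryBiproducts C]

noncomputable def biprodIsoSum {m l : ℕ} (fY : Fin m → C) (fZ : Fin l → C) :
    (⨁ fY) ⊞ (⨁ fZ) ≅ ⨁ (Fin.append fY fZ) := by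
  haveI : HasBiproductsOfShape (Fin m ⊕ Fin l) C :=
    hasBiproductsOfShape_of_equiv C finSumFinEquiv
  refine ?_ ≪≫ biproduct.whiskerEquiv (f := Sum.elim fY fZ) (g := Fin.append fY fZ) finSumFinEquiv
    (fun j => eqToIso (by cases j <;> simp))
  exact
  { hom := biprod.desc (biproduct.desc fun i => biproduct.ι (Sum.elim fY fZ) (.inl i))
      (biproduct.desc fun j => biproduct.ι (Sum.elim fY fZ) (.inr j))
    inv := biproduct.desc fun s =>
      Sum.rec (fun i => biproduct.ι fY i ≫ biprod.inl) (fun j => biproduct.ι fZ j ≫ biprod.inr) s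
    hom_inv_id := by
      ext <;> simp only [Category.assoc, biprod.inl_desc_assoc, biprod.inr_desc_assoc] <;>
        erw [biproduct.ι_desc_assoc, biproduct.ι_desc_assoc] <;> simp
    inv_hom_id := by
      ext j j'
      rcases j with i | i <;> rcases j' with i' | i' <;>
        simp only [Category.assoc, Category.id_comp] <;> erw [biproduct.ι_desc_assoc]
      · erw [Category.assoc, biprod.inl_desc_assoc, biproduct.ι_desc_assoc]; simp [biproduct.ι_π]
      · erw [Category.assoc, biprod.inr_desc_assoc, biproduct.ι_desc_assoc]; simp [biproduct.ι_π]
      · erw [Category.assoc, biprod.inl_desc_assoc, biproduct.ι_desc_assoc]; simp [biproduct.ι_π]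
      · erw [Category.assoc, biprod.inr_desc_assoc, biproduct.ι_desc_assoc]; simp [biproduct.ι_π] }

end SumBiprod

section Finrank
open Module
variable {k : Type*} [Field k] {C : Type*} [Category C] [Preadditive C] [Linear k C]
  [HasBinaryBiproducts C]

theorem finrank_lt_of_biprod {X Y Z : C} (isoX : X ≅ Y ⊞ Z)
    [FiniteDimensional k (X ⟶ X)] [FiniteDimensional k (Y ⟶ Y)] [FiniteDimensional k (Z ⟶ Z)]
    (hZ : 𝟙 Z ≠ 0) :
    finrank k (Y ⟶ Y) < finrank k (X ⟶ X) := by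
  let φ : ((Y ⟶ Y) × (Z ⟶ Z)) →ₗ[k] (X ⟶ X) :=
    { toFun := fun ab =>
        isoX.hom ≫ (biprod.fst ≫ ab.1 ≫ biprod.inl + biprod.snd ≫ ab.2 ≫ biprod.inr) ≫ isoX.inv
      map_add' := by
        intro ab cd
        simp [Preadditive.comp_add, Preadditive.add_comp]
        abel
      map_smul' := by
        intro c ab
        simp [CategoryTheory.Linear.comp_smul, CategoryTheory.Linear.smul_comp,
          Preadditive.comp_add, Preadditive.add_comp, smul_add] }
  have hinj : Function.Injective φ := by
    rw [injective_iff_map_eq_zero]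
    intro ab hab
    have h1 : ab.1 = 0 := by
      have := congrArg (fun w => biprod.inl ≫ isoX.inv ≫ w ≫ isoX.hom ≫ biprod.fst) hab
      simpa [φ] using this
    have h2 : ab.2 = 0 := by
      have := congrArg (fun w => biprod.inr ≫ isoX.inv ≫ w ≫ isoX.hom ≫ biprod.snd) hab
      simpa [φ] using this
    exact Prod.ext h1 h2
  have hle : finrank k ((Y ⟶ Y) × (Z ⟶ Z)) ≤ finrank k (X ⟶ X) :=
    LinearMap.finrank_le_finrank_of_injective hinj
  rw [finrank_prod] at hle
  have hpos : 0 < finrank k (Z ⟶ Z) :=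
    finrank_pos (R := k) (M := Z ⟶ Z) (h := ⟨⟨𝟙 Z, 0, hZ⟩⟩)
  omega

end Finrank

end CoTAux

/-- A co-`t`-structure on a triangulated category: a pair of full additive subcategories
(given by iso-closed predicates) closed under direct summands, with the shift, orthogonality
and decomposition-triangle axioms. -/
structure CoTStructure (C : Type*) [Category C] [Preadditive C] [HasZeroObject C]
    [HasShift C ℤ] [∀ n : ℤ, (shiftFunctor C n).Additive] [Pretriangulated C] where
  ge : C → Prop
  le : C → Prop
  ge_iso : ∀ {X Y : C}, (X ≅ Y) → ge X → ge Y
  le_iso : ∀ {X Y : C}, (X ≅ Y) → le X → le Y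
  ge_summand : ∀ X Y : C, ge (X ⊞ Y) → ge X
  le_summand : ∀ X Y : C, le (X ⊞ Y) → le X
  ge_shift : ∀ X : C, ge X → ge (X⟦(-1 : ℤ)⟧)
  le_shift : ∀ X : C, le X → le (X⟦(1 : ℤ)⟧)
  hom_zero : ∀ A B : C, ge A → le B → ∀ f : A ⟶ B⟦(1 : ℤ)⟧, f = 0
  exists_triangle : ∀ X : C, ∃ (A B : C) (f : A ⟶ X) (g : X ⟶ B) (h : B ⟶ A⟦(1 : ℤ)⟧),
    (Triangle.mk f g h ∈ distTriang C) ∧ ge A ∧ le (B⟦(-1 : ℤ)⟧)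

/-- Lemma 2.7 (Krull--Schmidt coheart): if `D` is a `k`-linear triangulated category with
a co-`t`-structure, `D` is Karoubian, and all Hom-spaces from `D_{≥0}` to `D_{≤0}` are
finite-dimensional over `k`, then the coheart `D_{≥0} ∩ D_{≤0}` is Krull--Schmidt:
every object in it is a finite direct sum of objects of the coheart with local
endomorphism rings. -/
theorem coheart_krullSchmidt
    {k : Type*} [Field k] {C : Type*} [Category C] [Preadditive C] [Linear k C]
    [HasZeroObject C] [HasShift C ℤ] [∀ n : ℤ, (shiftFunctor C n).Additive]
    [Pretriangulated C] [IsIdempotentComplete C]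
    (t : CoTStructure C)
    (hfin : ∀ X Y : C, t.ge X → t.le Y → FiniteDimensional k (X ⟶ Y)) :
    ∀ X : C, t.ge X → t.le X →
      ∃ (n : ℕ) (f : Fin n → C),
        (∀ i, t.ge (f i) ∧ t.le (f i) ∧ IsLocalRing (End (f i))) ∧
        Nonempty (X ≅ ⨁ f) := by
  suffices H : ∀ N : ℕ, ∀ X : C, t.ge X → t.le X → Module.finrank k (X ⟶ X) ≤ N →
      ∃ (n : ℕ) (f : Fin n → C),
        (∀ i, t.ge (f i) ∧ t.le (f i) ∧ IsLocalRing (End (f i))) ∧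
        Nonempty (X ≅ ⨁ f) by
    intro X hg hl
    exact H (Module.finrank k (X ⟶ X)) X hg hl le_rfl
  have zeroCase : ∀ X : C, 𝟙 X = 0 →
      ∃ (n : ℕ) (f : Fin n → C),
        (∀ i, t.ge (f i) ∧ t.le (f i) ∧ IsLocalRing (End (f i))) ∧
        Nonempty (X ≅ ⨁ f) := by
    intro X h0
    have hzX : IsZero X := (IsZero.iff_id_eq_zero X).mpr h0
    have hzB : IsZero (⨁ (Fin.elim0 : Fin 0 → C)) := by
      rw [IsZero.iff_id_eq_zero]
      apply biproduct.hom_ext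
      intro j
      exact j.elim0
    exact ⟨0, Fin.elim0, fun i => i.elim0, ⟨hzX.iso hzB⟩⟩
  intro N
  induction N with
  | zero =>
    intro X hg hl hr
    haveI := hfin X X hg hl
    have hsub : Subsingleton (X ⟶ X) :=
      (Module.finrank_zero_iff (R := k) (M := X ⟶ X)).mp (Nat.le_zero.mp hr)
    exact zeroCase X (Subsingleton.elim _ _)
  | succ N ih =>
    intro X hg hl hr
    by_cases h0 : 𝟙 X = 0
    · exact zeroCase X h0
    haveI : FiniteDimensional k (End X) := hfin X X hg hl
    haveI : Nontrivial (End X) := ⟨𝟙 X, 0, h0⟩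
    by_cases hloc : IsLocalRing (End X)
    · exact ⟨1, fun _ => X, fun _ => ⟨hg, hl, hloc⟩, ⟨(biproductUniqueIso fun _ : Fin 1 => X).symm⟩⟩
    obtain ⟨e, he, he0, he1⟩ := CoTAux.exists_nontrivial_idem (k := k) hloc
    let e' : X ⟶ X := e
    have hee : e' ≫ e' = e' := he
    have hcompl : (𝟙 X - e') ≫ (𝟙 X - e') = 𝟙 X - e' := by
      simp only [Preadditive.sub_comp, Preadditive.comp_sub, Category.id_comp, Category.comp_id,
        hee]
      abel
    obtain ⟨Y, i, r, hir, hri⟩ := IsIdempotentComplete.idempotents_split X e' hee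
    obtain ⟨Z, j, s, hjs, hsj⟩ :=
      IsIdempotentComplete.idempotents_split X (𝟙 X - e') hcompl
    have hsum : r ≫ i + s ≫ j = 𝟙 X := by rw [hri, hsj]; abel
    have isoX : X ≅ Y ⊞ Z := CoTAux.splitIso i r j s hir hjs hsum
    have hgYZ : t.ge (Y ⊞ Z) := t.ge_iso isoX hg
    have hlYZ : t.le (Y ⊞ Z) := t.le_iso isoX hl
    have hgY : t.ge Y := t.ge_summand Y Z hgYZ
    have hlY : t.le Y := t.le_summand Y Z hlYZ
    have hgZ : t.ge Z := t.ge_summand Z Y (t.ge_iso (biprod.braiding Y Z) hgYZ)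
    have hlZ : t.le Z := t.le_summand Z Y (t.le_iso (biprod.braiding Y Z) hlYZ)
    have hY0 : 𝟙 Y ≠ 0 := by
      intro hzero
      apply he0
      have hi : i = 0 := by rw [← Category.id_comp i, hzero, Limits.zero_comp]
      have : e' = 0 := by rw [← hri, hi, Limits.comp_zero]
      exact this
    have hZ0 : 𝟙 Z ≠ 0 := by
      intro hzero
      apply he1
      have hj : j = 0 := by rw [← Category.id_comp j, hzero, Limits.zero_comp]
      have h1 : 𝟙 X - e' = 0 := by rw [← hsj, hj, Limits.comp_zero]
      have : e' = 𝟙 X := (sub_eq_zero.mp h1).symm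
      exact this
    haveI := hfin X X hg hl
    haveI := hfin Y Y hgY hlY
    haveI := hfin Z Z hgZ hlZ
    have hltY : Module.finrank k (Y ⟶ Y) < Module.finrank k (X ⟶ X) :=
      CoTAux.finrank_lt_of_biprod isoX hZ0
    have hltZ : Module.finrank k (Z ⟶ Z) < Module.finrank k (X ⟶ X) :=
      CoTAux.finrank_lt_of_biprod (isoX ≪≫ biprod.braiding Y Z) hY0
    obtain ⟨mY, fY, hfY, ⟨isoY⟩⟩ := ih Y hgY hlY (Nat.lt_succ_iff.mp (lt_of_lt_of_le hltY hr))
    obtain ⟨mZ, fZ, hfZ, ⟨isoZ⟩⟩ := ih Z hgZ hlZ (Nat.lt_succ_iff.mp (lt_of_lt_of_le hltZ hr))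
    refine ⟨mY + mZ, Fin.append fY fZ, ?_, ?_⟩
    · intro idx
      refine Fin.addCases (motive := fun idx =>
        t.ge (Fin.append fY fZ idx) ∧ t.le (Fin.append fY fZ idx) ∧
          IsLocalRing (End (Fin.append fY fZ idx))) (fun i1 => ?_) (fun i1 => ?_) idx
      · rw [Fin.append_left]
        exact hfY i1
      · rw [Fin.append_right]
        exact hfZ i1
    · exact ⟨isoX ≪≫ biprod.mapIso isoY isoZ ≪≫ CoTAux.biprodIsoSum fY fZ⟩
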